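/- Let q : ℤ² → ℝ³ be a normalized DIIAS, i.e., for all (u,v): q₁₂(u,v) = (0,0,1), [q₁(u,v), q₂(u,v), (0,0,1)] = 1, q₂₂(u,v) = 0, and q₁₁(u,v) lies in the linear span of q₁(u,v) and q₂(u,v). Define A(u,v) = [q₁(u−1,v), q₁(u,v), (0,0,1)]. Then the following are equivalent: (i) there exist a real number a ≠ 0 and an invertible affine transformation T of ℝ³ such that T(q(u,v)) = (u, v + a·u(u−1)/2, u·v + a·u(u²−1)/6) for all (u,v) ∈ ℤ² (q is affinely congruent to a discrete Cayley surface); (ii) A is a nonzero constant, i.e., A(u,v) ≠ 0 and A(u+1,v) = A(u,v) for all (u,v). -/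

import Mathlib

noncomputable section

abbrev R3 : Type := ℝ × ℝ × ℝ
abbrev R2 : Type := ℝ × ℝ

/-- Determinant of the 3×3 matrix with columns `a`, `b`, `c`. -/
def det3 (a b c : R3) : ℝ :=
  a.1 * (b.2.1 * c.2.2 - b.2.2 * c.2.1)
    - b.1 * (a.2.1 * c.2.2 - a.2.2 * c.2.1)
    + c.1 * (a.2.1 * b.2.2 - a.2.2 * b.2.1)

/-- Determinant of the 2×2 matrix with columns `a`, `b`. -/
def det2 (a b : R2) : ℝ := a.1 * b.2 - a.2 * b.1

def e3 : R3 := ((0 : ℝ), (0 : ℝ), (1 : ℝ))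

/-- First discrete partial derivative `q₁`. -/
def D1 (q : ℤ → ℤ → R3) (u v : ℤ) : R3 := q (u + 1) v - q u v

/-- Second discrete partial derivative `q₂`. -/
def D2 (q : ℤ → ℤ → R3) (u v : ℤ) : R3 := q u (v + 1) - q u v

/-- Mixed discrete second derivative `q₁₂`. -/
def D12 (q : ℤ → ℤ → R3) (u v : ℤ) : R3 :=
  q (u + 1) (v + 1) - q (u + 1) v - q u (v + 1) + q u v

/-- Discrete second derivative `q₁₁`. -/
def D11 (q : ℤ → ℤ → R3) (u v : ℤ) : R3 := q (u + 1) v - (2 : ℝ) • q u v + q (u - 1) v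

/-- Discrete second derivative `q₂₂`. -/
def D22 (q : ℤ → ℤ → R3) (u v : ℤ) : R3 := q u (v + 1) - (2 : ℝ) • q u v + q u (v - 1)

/-- The discrete affine metric `Ω(u,v) = [q₁(u,v), q₂(u,v), ξ]`. -/
def Omega (q : ℤ → ℤ → R3) (ξ : R3) (u v : ℤ) : ℝ := det3 (D1 q u v) (D2 q u v) ξ

/-- Cubic form coefficient `A(u,v) = [q₁(u−1,v), q₁(u,v), ξ]`. -/
def Acoef (q : ℤ → ℤ → R3) (ξ : R3) (u v : ℤ) : ℝ := det3 (D1 q (u - 1) v) (D1 q u v) ξ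

/-- Cubic form coefficient `B(u,v) = [q₂(u,v), q₂(u,v−1), ξ]`. -/
def Bcoef (q : ℤ → ℤ → R3) (ξ : R3) (u v : ℤ) : ℝ := det3 (D2 q u v) (D2 q u (v - 1)) ξ

/-- `q` is a discrete improper indefinite affine sphere with affine normal `ξ`. -/
def IsDIIAS (q : ℤ → ℤ → R3) (ξ : R3) : Prop :=
  ∀ u v : ℤ,
    D12 q u v = Omega q ξ u v • ξ ∧
    0 < Omega q ξ u v ∧
    D1 q (u - 1) v ∈ Submodule.span ℝ {D1 q u v, D2 q u v} ∧
    D2 q u (v - 1) ∈ Submodule.span ℝ {D1 q u v, D2 q u v}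

/-- `x(u,v) = ½(α(u)+β(v))`. -/
def xcc (α β : ℤ → R2) (u v : ℤ) : R2 := (1 / 2 : ℝ) • (α u + β v)

/-- `y(u,v) = ½(β(v)−α(u))`. -/
def ycc (α β : ℤ → R2) (u v : ℤ) : R2 := (1 / 2 : ℝ) • (β v - α u)

/-- `z` satisfies the discrete centre-chord equations for the pair `(α,β)`. -/
def IsCentreChordZ (α β : ℤ → R2) (z : ℤ → ℤ → ℝ) : Prop :=
  ∀ u v : ℤ,
    z (u + 1) v - z u v = det2 (xcc α β (u + 1) v - xcc α β u v) (ycc α β u v) ∧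
    z u (v + 1) - z u v = det2 (xcc α β u (v + 1) - xcc α β u v) (ycc α β u v)

/-- The centre-chord net `q(u,v) = (x(u,v), z(u,v))`. -/
def ccq (α β : ℤ → R2) (z : ℤ → ℤ → ℝ) (u v : ℤ) : R3 :=
  ((xcc α β u v).1, (xcc α β u v).2, z u v)

/-- `Ω(u,v) = ¼ det(α₁(u), β₂(v))` of the centre-chord construction. -/
def OmegaCC (α β : ℤ → R2) (u v : ℤ) : ℝ :=
  (1 / 4 : ℝ) * det2 (α (u + 1) - α u) (β (v + 1) - β v)

/-- `α₁(u)` is discretely parallel to `β(v)`. -/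
def dpAB (α β : ℤ → R2) (u v : ℤ) : Prop :=
  0 < det2 (α (u + 1) - α u) (β (v + 1) - β v) * det2 (α (u + 1) - α u) (β (v - 1) - β v)

/-- `β₂(v)` is discretely parallel to `α(u)`. -/
def dpBA (α β : ℤ → R2) (u v : ℤ) : Prop :=
  0 < det2 (β (v + 1) - β v) (α (u + 1) - α u) * det2 (β (v + 1) - β v) (α (u - 1) - α u)

/-- Genericity assumption (G1). -/
def G1 (α β : ℤ → R2) : Prop :=
  ∀ u v : ℤ,
    LinearIndependent ℝ ![β (v - 1) - α u, β (v + 1) - α u] ∧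
    ∃ s t : ℝ, 0 < s ∧ 0 < t ∧
      β v - α u = s • (β (v - 1) - α u) + t • (β (v + 1) - α u)

/-- Genericity assumption (G2). -/
def G2 (α β : ℤ → R2) : Prop :=
  ∀ u v : ℤ,
    LinearIndependent ℝ ![α (u - 1) - β v, α (u + 1) - β v] ∧
    ∃ s t : ℝ, 0 < s ∧ 0 < t ∧
      α u - β v = s • (α (u - 1) - β v) + t • (α (u + 1) - β v)

/-- Genericity assumption (G3): no edge of `α` is parallel to an edge of `β`. -/
def G3 (α β : ℤ → R2) : Prop :=
  ∀ u v : ℤ, det2 (α (u + 1) - α u) (β (v + 1) - β v) ≠ 0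

/-- Euclidean dot product on `ℝ³`. -/
def dot3 (a b : R3) : ℝ := a.1 * b.1 + a.2.1 * b.2.1 + a.2.2 * b.2.2

/-- Projection of `ℝ³` onto the first two coordinates. -/
def projxy (p : R3) : R2 := (p.1, p.2.1)

private lemma R3ext {p p' : R3} (h1 : p.1 = p'.1) (h2 : p.2.1 = p'.2.1)
    (h3 : p.2.2 = p'.2.2) : p = p' := by
  obtain ⟨a, b, c⟩ := p; obtain ⟨d, e, f⟩ := p'; simp_all

private def φmap (G1 G2 G3 R1 R2 R3' : ℝ) : R3 →ₗ[ℝ] R3 where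
  toFun p := (R2 * p.1 - R1 * p.2.1, -G2 * p.1 + G1 * p.2.1,
    p.2.2 - G3 * (R2 * p.1 - R1 * p.2.1) - R3' * (-G2 * p.1 + G1 * p.2.1))
  map_add' x y := by simp [Prod.ext_iff]; refine ⟨by ring, by ring, by ring⟩
  map_smul' c x := by simp [Prod.ext_iff]; refine ⟨by ring, by ring, by ring⟩

private def ψmap (G1 G2 G3 R1 R2 R3' : ℝ) : R3 →ₗ[ℝ] R3 where
  toFun p := (G1 * p.1 + R1 * p.2.1, G2 * p.1 + R2 * p.2.1, G3 * p.1 + R3' * p.2.1 + p.2.2)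
  map_add' x y := by simp [Prod.ext_iff]; refine ⟨by ring, by ring, by ring⟩
  map_smul' c x := by simp [Prod.ext_iff]; refine ⟨by ring, by ring, by ring⟩

private def Lequiv (G1 G2 G3 R1 R2 R3' : ℝ) (h : G1 * R2 - R1 * G2 = 1) : R3 ≃ₗ[ℝ] R3 :=
  LinearEquiv.ofLinear (φmap G1 G2 G3 R1 R2 R3') (ψmap G1 G2 G3 R1 R2 R3')
    (by
      apply LinearMap.ext; intro p
      simp [φmap, ψmap, LinearMap.comp_apply, Prod.ext_iff]
      refine ⟨by linear_combination p.1 * h, by linear_combination p.2.1 * h,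
        by linear_combination (-(G3 * p.1) - R3' * p.2.1) * h⟩)
    (by
      apply LinearMap.ext; intro p
      simp [φmap, ψmap, LinearMap.comp_apply, Prod.ext_iff]
      exact ⟨by linear_combination p.1 * h, by linear_combination p.2.1 * h⟩)

/-- a normalized DIIAS is affinely congruent to a discrete
Cayley surface if and only if `A` is a nonzero constant. -/
theorem stmt14 (q : ℤ → ℤ → R3)
    (h12 : ∀ u v : ℤ, D12 q u v = e3)
    (hΩ : ∀ u v : ℤ, det3 (D1 q u v) (D2 q u v) e3 = 1)
    (h22 : ∀ u v : ℤ, D22 q u v = 0)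
    (h11 : ∀ u v : ℤ, D11 q u v ∈ Submodule.span ℝ {D1 q u v, D2 q u v}) :
    (∃ a : ℝ, a ≠ 0 ∧ ∃ (L : R3 ≃ₗ[ℝ] R3) (w : R3), ∀ u v : ℤ,
        L (q u v) + w = ((u : ℝ), (v : ℝ) + a * (u : ℝ) * ((u : ℝ) - 1) / 2,
          (u : ℝ) * (v : ℝ) + a * (u : ℝ) * ((u : ℝ) ^ 2 - 1) / 6)) ↔
    (∀ u v : ℤ, Acoef q e3 u v ≠ 0 ∧ Acoef q e3 (u + 1) v = Acoef q e3 u v) := by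
  set r : R3 := D2 q 0 0 with hrdef
  have hD2v : ∀ u v : ℤ, D2 q u (v + 1) = D2 q u v := by
    intro u v
    have h := h22 u (v + 1)
    rw [D22, add_sub_cancel_right] at h
    simp only [D2]
    linear_combination (norm := module) h
  have hD2c : ∀ u v : ℤ, D2 q u v = D2 q u 0 := by
    intro u v
    induction v using Int.induction_on with
    | zero => rfl
    | succ n ih => rw [hD2v, ih]
    | pred n ih =>
        have h := hD2v u (-(n : ℤ) - 1)
        rw [show (-(n : ℤ) - 1 + 1) = -(n : ℤ) by ring] at h
        rw [← h]; exact ih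
  have hD12D2 : ∀ u v : ℤ, D2 q (u + 1) v - D2 q u v = e3 := by
    intro u v
    rw [← h12 u v]
    simp only [D2, D12]
    abel
  have hD12D1 : ∀ u v : ℤ, D1 q u (v + 1) - D1 q u v = e3 := by
    intro u v
    rw [← h12 u v]
    simp only [D1, D12]
    abel
  have hD2 : ∀ u v : ℤ, D2 q u v = r + (u : ℝ) • e3 := by
    intro u v
    rw [hD2c]
    induction u using Int.induction_on with
    | zero => simp [hrdef]
    | succ n ih =>
        have h := hD12D2 n 0
        push_cast
        push_cast at ih
        linear_combination (norm := module) ih + h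
    | pred n ih =>
        have h := hD12D2 (-(n : ℤ) - 1) 0
        rw [show (-(n : ℤ) - 1 + 1) = -(n : ℤ) by ring] at h
        push_cast
        push_cast at ih
        linear_combination (norm := module) ih - h
  have hD1 : ∀ u v : ℤ, D1 q u v = D1 q u 0 + (v : ℝ) • e3 := by
    intro u v
    induction v using Int.induction_on with
    | zero => simp
    | succ n ih =>
        have h := hD12D1 u n
        push_cast
        push_cast at ih
        linear_combination (norm := module) ih + h
    | pred n ih =>
        have h := hD12D1 u (-(n : ℤ) - 1)
        rw [show (-(n : ℤ) - 1 + 1) = -(n : ℤ) by ring] at h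
        push_cast
        push_cast at ih
        linear_combination (norm := module) ih - h
  have hdet : ∀ u : ℤ, (D1 q u 0).1 * r.2.1 - r.1 * (D1 q u 0).2.1 = 1 := by
    intro u
    have h := hΩ u 0
    rw [hD2 u 0] at h
    simp [det3, e3] at h
    linear_combination h
  have hd11 : ∀ u v : ℤ, D11 q u v = D1 q u 0 - D1 q (u - 1) 0 := by
    intro u v
    have h1 : D11 q u v = D1 q u v - D1 q (u - 1) v := by
      simp only [D11, D1]
      rw [show u - 1 + 1 = u by ring]
      module
    rw [h1, hD1 u v, hD1 (u - 1) v]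
    abel
  have hkey : ∀ u : ℤ, D1 q u 0 - D1 q (u - 1) 0
      = (Acoef q e3 u 0) • (r + (u : ℝ) • e3) := by
    intro u
    obtain ⟨m, n, hmn⟩ := Submodule.mem_span_pair.mp (h11 u 0)
    obtain ⟨m', n', hmn'⟩ := Submodule.mem_span_pair.mp (h11 u 1)
    rw [hd11 u 0, hD2 u 0] at hmn
    rw [hd11 u 1, hD1 u 1, hD2 u 1] at hmn'
    have a1 := congrArg Prod.fst hmn
    have a2 := congrArg (fun p : R3 => p.2.1) hmn
    have a3 := congrArg (fun p : R3 => p.2.2) hmn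
    have b1 := congrArg Prod.fst hmn'
    have b2 := congrArg (fun p : R3 => p.2.1) hmn'
    have b3 := congrArg (fun p : R3 => p.2.2) hmn'
    simp [e3] at a1 a2 a3 b1 b2 b3
    have hd := hdet u
    have hm' : m' = m := by
      linear_combination r.2.1 * b1 - r.2.1 * a1 - r.1 * b2 + r.1 * a2 - (m' - m) * hd
    have hn' : n' = n := by
      linear_combination (D1 q u 0).1 * b2 - (D1 q u 0).1 * a2
        - (D1 q u 0).2.1 * b1 + (D1 q u 0).2.1 * a1 - (n' - n) * hd
    rw [hm', hn'] at b3
    have hm0 : m = 0 := by linear_combination b3 - a3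
    have hA : Acoef q e3 u 0 = n := by
      unfold Acoef
      simp [det3, e3]
      linear_combination (D1 q u 0).2.1 * a1 - (D1 q u 0).1 * a2 + n * hd
    rw [hm0, zero_smul, zero_add] at hmn
    rw [hA]
    exact hmn.symm
  have hAv : ∀ u v : ℤ, Acoef q e3 u v = Acoef q e3 u 0 := by
    intro u v
    unfold Acoef
    rw [hD1 (u - 1) v, hD1 u v]
    simp [det3, e3]
  constructor
  · rintro ⟨a, ha, L, w, hT⟩
    have hLq : ∀ u v : ℤ, L (q u v)
        = (((u : ℝ), (v : ℝ) + a * (u : ℝ) * ((u : ℝ) - 1) / 2,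
          (u : ℝ) * (v : ℝ) + a * (u : ℝ) * ((u : ℝ) ^ 2 - 1) / 6) : R3) - w := by
      intro u v
      rw [eq_sub_iff_add_eq]
      exact hT u v
    have hLD1 : ∀ u : ℤ, L (D1 q u 0)
        = (((1 : ℝ), a * (u : ℝ), a * (u : ℝ) * ((u : ℝ) + 1) / 2) : R3) := by
      intro u
      have e : D1 q u 0 = q (u + 1) 0 - q u 0 := rfl
      rw [e, map_sub, hLq (u + 1) 0, hLq u 0]
      apply R3ext <;> simp <;> push_cast <;> ring
    have hLe3 : L e3 = e3 := by
      have e : (e3 : R3) = q 1 1 - q 1 0 - q 0 1 + q 0 0 := by rw [← h12 0 0]; rfl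
      nth_rewrite 1 [e]
      rw [map_add, map_sub, map_sub, hLq 1 1, hLq 1 0, hLq 0 1, hLq 0 0]
      apply R3ext <;> simp [e3] <;> push_cast <;> ring
    have hLD2 : ∀ u : ℤ, L (r + (u : ℝ) • e3) = (((0 : ℝ), (1 : ℝ), (u : ℝ)) : R3) := by
      intro u
      have e : r + (u : ℝ) • e3 = q u 1 - q u 0 := by rw [← hD2 u 0]; rfl
      rw [e, map_sub, hLq u 1, hLq u 0]
      apply R3ext <;> simp <;> push_cast <;> ring
    have hAa : ∀ u : ℤ, Acoef q e3 u 0 = a := by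
      intro u
      have h1 := congrArg L (hkey u)
      rw [map_sub, map_smul, hLD1 u, hLD1 (u - 1), hLD2 u] at h1
      have h2 := congrArg (fun p : R3 => p.2.1) h1
      simp at h2
      push_cast at h2
      linear_combination -h2
    intro u v
    refine ⟨?_, ?_⟩
    · rw [hAv u v, hAa u]; exact ha
    · rw [hAv (u + 1) v, hAv u v, hAa, hAa]
  · intro hA
    set a : ℝ := Acoef q e3 0 0 with hadef
    have ha : a ≠ 0 := (hA 0 0).1
    have hAc : ∀ u : ℤ, Acoef q e3 u 0 = a := by
      intro u
      induction u using Int.induction_on with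
      | zero => rfl
      | succ n ih => rw [(hA n 0).2, ih]
      | pred n ih =>
          have h := (hA (-(n : ℤ) - 1) 0).2
          rw [show (-(n : ℤ) - 1 + 1) = -(n : ℤ) by ring] at h
          rw [← h]; exact ih
    have hkey' : ∀ u : ℤ, D1 q u 0
        = D1 q 0 0 + (a * (u : ℝ)) • r + (a * (u : ℝ) * ((u : ℝ) + 1) / 2) • e3 := by
      intro u
      induction u using Int.induction_on with
      | zero => norm_num
      | succ n ih =>
          have h := hkey ((n : ℤ) + 1)
          rw [show ((n : ℤ) + 1 - 1) = (n : ℤ) by ring, hAc] at h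
          push_cast
          push_cast at h ih
          linear_combination (norm := module) ih + h
      | pred n ih =>
          have h := hkey (-(n : ℤ))
          rw [hAc] at h
          push_cast
          push_cast at h ih
          linear_combination (norm := module) ih - h
    have hq0 : ∀ u : ℤ, q u 0 = q 0 0 + (u : ℝ) • D1 q 0 0
        + (a * (u : ℝ) * ((u : ℝ) - 1) / 2) • r
        + (a * (u : ℝ) * ((u : ℝ) ^ 2 - 1) / 6) • e3 := by
      intro u
      induction u using Int.induction_on with
      | zero => norm_num
      | succ n ih =>
          have h : q ((n : ℤ) + 1) 0 - q (n : ℤ) 0 = D1 q (n : ℤ) 0 := rfl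
          rw [hkey' (n : ℤ)] at h
          push_cast
          push_cast at h ih
          linear_combination (norm := module) ih + h
      | pred n ih =>
          have h : q (-(n : ℤ)) 0 - q (-(n : ℤ) - 1) 0 = D1 q (-(n : ℤ) - 1) 0 := by
            show _ = q (-(n : ℤ) - 1 + 1) 0 - q (-(n : ℤ) - 1) 0
            rw [show (-(n : ℤ) - 1 + 1) = -(n : ℤ) by ring]
          rw [hkey' (-(n : ℤ) - 1)] at h
          push_cast
          push_cast at h ih
          linear_combination (norm := module) ih - h
    have hqv : ∀ u v : ℤ, q u v = q u 0 + (v : ℝ) • (r + (u : ℝ) • e3) := by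
      intro u v
      induction v using Int.induction_on with
      | zero => norm_num
      | succ n ih =>
          have h : q u ((n : ℤ) + 1) - q u (n : ℤ) = r + (u : ℝ) • e3 := by
            rw [← hD2 u (n : ℤ)]; rfl
          push_cast
          push_cast at ih
          linear_combination (norm := module) ih + h
      | pred n ih =>
          have h : q u (-(n : ℤ)) - q u (-(n : ℤ) - 1) = r + (u : ℝ) • e3 := by
            rw [← hD2 u (-(n : ℤ) - 1)]
            show _ = q u (-(n : ℤ) - 1 + 1) - q u (-(n : ℤ) - 1)
            rw [show (-(n : ℤ) - 1 + 1) = -(n : ℤ) by ring]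
          push_cast
          push_cast at ih
          linear_combination (norm := module) ih - h
    have hq : ∀ u v : ℤ, q u v - q 0 0 = (u : ℝ) • D1 q 0 0
        + ((v : ℝ) + a * (u : ℝ) * ((u : ℝ) - 1) / 2) • r
        + ((u : ℝ) * (v : ℝ) + a * (u : ℝ) * ((u : ℝ) ^ 2 - 1) / 6) • e3 := by
      intro u v
      rw [hqv u v, hq0 u]
      module
    have hd0 := hdet 0
    set L : R3 ≃ₗ[ℝ] R3 :=
      Lequiv (D1 q 0 0).1 (D1 q 0 0).2.1 (D1 q 0 0).2.2 r.1 r.2.1 r.2.2 hd0 with hLdef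
    have hLg : L (D1 q 0 0) = (((1 : ℝ), (0 : ℝ), (0 : ℝ)) : R3) := by
      simp only [hLdef, Lequiv, LinearEquiv.ofLinear_apply, φmap, LinearMap.coe_mk,
        AddHom.coe_mk]
      refine R3ext ?_ ?_ ?_ <;> simp
      · linear_combination hd0
      · ring
      · linear_combination (-(D1 q 0 0).2.2) * hd0
    have hLr : L r = (((0 : ℝ), (1 : ℝ), (0 : ℝ)) : R3) := by
      simp only [hLdef, Lequiv, LinearEquiv.ofLinear_apply, φmap, LinearMap.coe_mk,
        AddHom.coe_mk]
      refine R3ext ?_ ?_ ?_ <;> simp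
      · ring
      · linear_combination hd0
      · linear_combination (-r.2.2) * hd0
    have hLe : L e3 = e3 := by
      simp only [hLdef, Lequiv, LinearEquiv.ofLinear_apply, φmap, LinearMap.coe_mk,
        AddHom.coe_mk]
      refine R3ext ?_ ?_ ?_ <;> simp [e3]
    refine ⟨a, ha, L, -(L (q 0 0)), ?_⟩
    intro u v
    rw [← sub_eq_add_neg, ← map_sub, hq u v, map_add, map_add, map_smul, map_smul,
      map_smul, hLg, hLr, hLe]
    apply R3ext <;> simp [e3]
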